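/- Let σ_d be a finite nonnegative purely atomic measure on [-π,π] with finitely many atoms at distinct points θ_α (with exp(iθ_α) pairwise distinct) of masses m_α, and let λ_m^{(d)}(N) be the largest eigenvalue of the Toeplitz matrix Q_N^{(d)} of its trigonometric moments. Then λ_m^{(d)}(N) = N·max_α m_α + O(1) as N → ∞. -/

import Mathlib

/-- The Toeplitz matrix of the purely atomic measure with atoms `θ α` of masses `m α`. -/
noncomputable def atomicToeplitz (s : ℕ) (m : Fin s → ℝ) (θ : Fin s → ℝ) (N : ℕ) :
    Matrix (Fin N) (Fin N) ℂ :=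
  Matrix.of fun j k => ∑ α, (m α : ℂ) * Complex.exp (Complex.I * (((j : ℤ) - (k : ℤ)) : ℂ) * (θ α : ℂ))

open scoped ComplexConjugate Matrix.Norms.L2Operator
open Matrix

section helpers

set_option linter.unusedSectionVars false

variable {n : Type*} [Fintype n] [DecidableEq n]

lemma euclid_coord_le_norm (x : EuclideanSpace ℂ n) (i : n) : ‖x i‖ ≤ ‖x‖ := by
  rw [EuclideanSpace.norm_eq]
  have h : ‖x i‖ ^ 2 ≤ ∑ j, ‖x j‖ ^ 2 :=
    Finset.single_le_sum (f := fun j => ‖x j‖ ^ 2) (fun _ _ => sq_nonneg _) (Finset.mem_univ i)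
  calc ‖x i‖ = Real.sqrt (‖x i‖ ^ 2) := (Real.sqrt_sq (norm_nonneg _)).symm
    _ ≤ _ := Real.sqrt_le_sqrt h

lemma clm_apply (A : Matrix n n ℂ) (x : EuclideanSpace ℂ n) (i : n) :
    (Matrix.toEuclideanCLM (𝕜 := ℂ) A) x i = (A.mulVec x) i := rfl

lemma matnorm_eq_clm (A : Matrix n n ℂ) : ‖A‖ = ‖Matrix.toEuclideanCLM (𝕜 := ℂ) A‖ :=
  Matrix.cstar_norm_def A

lemma opnorm_le_sum_entries (A : Matrix n n ℂ) :
    ‖A‖ ≤ ∑ i, ∑ j, ‖A i j‖ := by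
  rw [matnorm_eq_clm]
  apply ContinuousLinearMap.opNorm_le_bound _ (by positivity)
  intro x
  have hcoord : ∀ i, ‖(Matrix.toEuclideanCLM (𝕜 := ℂ) A) x i‖ ≤ (∑ j, ‖A i j‖) * ‖x‖ := by
    intro i
    rw [clm_apply, Matrix.mulVec, dotProduct]
    calc ‖∑ j, A i j * x j‖ ≤ ∑ j, ‖A i j * x j‖ := norm_sum_le _ _
      _ ≤ ∑ j, ‖A i j‖ * ‖x‖ := by
          refine Finset.sum_le_sum fun j _ => ?_
          rw [norm_mul]
          exact mul_le_mul_of_nonneg_left (euclid_coord_le_norm x j) (norm_nonneg _)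
      _ = (∑ j, ‖A i j‖) * ‖x‖ := (Finset.sum_mul _ _ _).symm
  calc ‖(Matrix.toEuclideanCLM (𝕜 := ℂ) A) x‖
      = Real.sqrt (∑ i, ‖(Matrix.toEuclideanCLM (𝕜 := ℂ) A) x i‖ ^ 2) := EuclideanSpace.norm_eq _
    _ ≤ Real.sqrt ((∑ i, ‖(Matrix.toEuclideanCLM (𝕜 := ℂ) A) x i‖) ^ 2) :=
        Real.sqrt_le_sqrt (Finset.sum_sq_le_sq_sum_of_nonneg fun _ _ => norm_nonneg _)
    _ = ∑ i, ‖(Matrix.toEuclideanCLM (𝕜 := ℂ) A) x i‖ :=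
        Real.sqrt_sq (Finset.sum_nonneg fun _ _ => norm_nonneg _)
    _ ≤ ∑ i, (∑ j, ‖A i j‖) * ‖x‖ := Finset.sum_le_sum fun i _ => hcoord i
    _ = (∑ i, ∑ j, ‖A i j‖) * ‖x‖ := (Finset.sum_mul _ _ _).symm

lemma opnorm_diagonal_le (v : n → ℂ) (c : ℝ) (hc : 0 ≤ c) (hv : ∀ i, ‖v i‖ ≤ c) :
    ‖Matrix.diagonal v‖ ≤ c := by
  rw [matnorm_eq_clm]
  apply ContinuousLinearMap.opNorm_le_bound _ hc
  intro x
  have hterm : ∀ i, ‖(Matrix.toEuclideanCLM (𝕜 := ℂ) (Matrix.diagonal v)) x i‖ ^ 2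
      ≤ c ^ 2 * ‖x i‖ ^ 2 := by
    intro i
    rw [clm_apply, Matrix.mulVec_diagonal, norm_mul, mul_pow]
    have := hv i
    have h2 : ‖v i‖ ^ 2 ≤ c ^ 2 := by nlinarith [norm_nonneg (v i)]
    nlinarith [sq_nonneg (‖x i‖), norm_nonneg (x i)]
  calc ‖(Matrix.toEuclideanCLM (𝕜 := ℂ) (Matrix.diagonal v)) x‖
      = Real.sqrt (∑ i, ‖(Matrix.toEuclideanCLM (𝕜 := ℂ) (Matrix.diagonal v)) x i‖ ^ 2) :=
        EuclideanSpace.norm_eq _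
    _ ≤ Real.sqrt (∑ i, c ^ 2 * ‖x i‖ ^ 2) :=
        Real.sqrt_le_sqrt (Finset.sum_le_sum fun i _ => hterm i)
    _ = Real.sqrt (c ^ 2 * ∑ i, ‖x i‖ ^ 2) := by rw [Finset.mul_sum]
    _ = c * Real.sqrt (∑ i, ‖x i‖ ^ 2) := by
        rw [Real.sqrt_mul (sq_nonneg c), Real.sqrt_sq hc]
    _ = c * ‖x‖ := by rw [EuclideanSpace.norm_eq]

lemma entry_le_opnorm (A : Matrix n n ℂ) (i j : n) : ‖A i j‖ ≤ ‖A‖ := by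
  rw [matnorm_eq_clm]
  set x : EuclideanSpace ℂ n := EuclideanSpace.single j 1 with hx
  have hxn : ‖x‖ = 1 := by rw [hx, EuclideanSpace.norm_single, norm_one]
  have happ : (Matrix.toEuclideanCLM (𝕜 := ℂ) A) x i = A i j := by
    rw [clm_apply, Matrix.mulVec, dotProduct]
    simp [hx, EuclideanSpace.single_apply]
  calc ‖A i j‖ = ‖(Matrix.toEuclideanCLM (𝕜 := ℂ) A) x i‖ := by rw [happ]
    _ ≤ ‖(Matrix.toEuclideanCLM (𝕜 := ℂ) A) x‖ := euclid_coord_le_norm _ i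
    _ ≤ ‖Matrix.toEuclideanCLM (𝕜 := ℂ) A‖ * ‖x‖ := ContinuousLinearMap.le_opNorm _ _
    _ = ‖Matrix.toEuclideanCLM (𝕜 := ℂ) A‖ := by rw [hxn, mul_one]

end helpers

noncomputable def atomFactor (s : ℕ) (m : Fin s → ℝ) (θ : Fin s → ℝ) (N : ℕ) :
    Matrix (Fin N) (Fin s) ℂ :=
  Matrix.of fun j α => (Real.sqrt (m α) : ℂ) * (Complex.exp (Complex.I * (θ α : ℂ))) ^ (j : ℕ)

lemma conj_exp_I_real (t : ℝ) :
    (starRingEnd ℂ) (Complex.exp (Complex.I * (t : ℂ)))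
      = (Complex.exp (Complex.I * (t : ℂ)))⁻¹ := by
  rw [← Complex.exp_conj, ← Complex.exp_neg]
  congr 1
  simp [Complex.conj_I]

lemma star_exp_I_real (t : ℝ) :
    star (Complex.exp (Complex.I * (t : ℂ))) = (Complex.exp (Complex.I * (t : ℂ)))⁻¹ := by
  rw [Complex.star_def]; exact conj_exp_I_real t

lemma star_ofReal (r : ℝ) : star ((r : ℝ) : ℂ) = ((r : ℝ) : ℂ) := by
  rw [Complex.star_def, Complex.conj_ofReal]

lemma norm_exp_I_real (t : ℝ) : ‖Complex.exp (Complex.I * (t : ℂ))‖ = 1 := by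
  rw [Complex.norm_exp]
  simp

lemma atomicToeplitz_eq_factor (s : ℕ) (m : Fin s → ℝ) (hm : ∀ α, 0 ≤ m α)
    (θ : Fin s → ℝ) (N : ℕ) :
    atomicToeplitz s m θ N = atomFactor s m θ N * (atomFactor s m θ N)ᴴ := by
  ext j k
  simp only [atomicToeplitz, atomFactor, Matrix.mul_apply, Matrix.conjTranspose_apply,
    Matrix.of_apply]
  refine Finset.sum_congr rfl fun α _ => ?_
  set e := Complex.exp (Complex.I * (θ α : ℂ)) with he
  have he0 : e ≠ 0 := Complex.exp_ne_zero _
  have h1 : Complex.I * ((((j : ℤ) - (k : ℤ)) : ℤ) : ℂ) * (θ α : ℂ)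
      = ((((j : ℤ) - (k : ℤ)) : ℤ) : ℂ) * (Complex.I * (θ α : ℂ)) := by push_cast; ring
  have h2 : Complex.exp (Complex.I * ((((j : ℤ) - (k : ℤ)) : ℤ) : ℂ) * (θ α : ℂ))
      = e ^ (((j : ℤ) - (k : ℤ)) : ℤ) := by
    rw [h1, Complex.exp_int_mul]
  rw [star_mul', star_pow, star_exp_I_real, star_ofReal, ← he]
  push_cast at h2 ⊢
  rw [h2, zpow_sub₀ he0]
  have h3 : ((Real.sqrt (m α) : ℂ)) * (Real.sqrt (m α) : ℂ) = (m α : ℂ) := by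
    rw [← Complex.ofReal_mul, Real.mul_self_sqrt (hm α)]
  rw [zpow_natCast, zpow_natCast]
  field_simp
  ring_nf
  rw [← h3]
  ring_nf
  rw [inv_pow, mul_assoc, mul_inv_cancel₀ (pow_ne_zero _ he0), mul_one]

lemma gram_apply (s : ℕ) (m : Fin s → ℝ) (θ : Fin s → ℝ) (N : ℕ) (α β : Fin s) :
    ((atomFactor s m θ N)ᴴ * atomFactor s m θ N) α β
      = ((Real.sqrt (m α) * Real.sqrt (m β) : ℝ) : ℂ) *
        ∑ j : Fin N,
          (Complex.exp (Complex.I * (θ β : ℂ)) / Complex.exp (Complex.I * (θ α : ℂ))) ^ (j : ℕ) := by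
  simp only [Matrix.mul_apply, Matrix.conjTranspose_apply, atomFactor, Matrix.of_apply]
  rw [Finset.mul_sum]
  refine Finset.sum_congr rfl fun j _ => ?_
  rw [star_mul', star_pow, star_exp_I_real, star_ofReal, div_pow, inv_pow]
  push_cast
  rw [div_eq_mul_inv]
  ring

lemma gram_diag (s : ℕ) (m : Fin s → ℝ) (hm : ∀ α, 0 ≤ m α) (θ : Fin s → ℝ) (N : ℕ) (α : Fin s) :
    ((atomFactor s m θ N)ᴴ * atomFactor s m θ N) α α = ((N : ℝ) * m α : ℝ) := by
  rw [gram_apply]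
  have h : Complex.exp (Complex.I * (θ α : ℂ)) / Complex.exp (Complex.I * (θ α : ℂ)) = 1 :=
    div_self (Complex.exp_ne_zero _)
  rw [h]
  simp [Real.mul_self_sqrt (hm α), mul_comm]

lemma geom_bound (s : ℕ) (θ : Fin s → ℝ) (N : ℕ) {α β : Fin s}
    (hdist : Function.Injective fun α => Complex.exp (Complex.I * (θ α : ℂ)))
    (hne : α ≠ β) :
    ‖∑ j : Fin N,
        (Complex.exp (Complex.I * (θ β : ℂ)) / Complex.exp (Complex.I * (θ α : ℂ))) ^ (j : ℕ)‖
      ≤ 2 / ‖Complex.exp (Complex.I * (θ β : ℂ)) / Complex.exp (Complex.I * (θ α : ℂ)) - 1‖ := by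
  set w := Complex.exp (Complex.I * (θ β : ℂ)) / Complex.exp (Complex.I * (θ α : ℂ)) with hw
  have hw1 : w ≠ 1 := by
    intro h
    apply hne
    apply hdist
    exact (div_eq_one_iff_eq (Complex.exp_ne_zero (Complex.I * (θ α : ℂ))) |>.mp h).symm
  have hwn : ‖w‖ = 1 := by
    rw [hw, norm_div, norm_exp_I_real, norm_exp_I_real]
    norm_num
  have hsum : ∑ j : Fin N, w ^ (j : ℕ) = (w ^ N - 1) / (w - 1) := by
    rw [Fin.sum_univ_eq_sum_range (fun j => w ^ j) N]
    exact geom_sum_eq hw1 N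
  rw [hsum, norm_div]
  have hnum : ‖w ^ N - 1‖ ≤ 2 := by
    calc ‖w ^ N - 1‖ ≤ ‖w ^ N‖ + ‖(1 : ℂ)‖ := norm_sub_le _ _
      _ = 2 := by rw [norm_pow, hwn]; norm_num
  have hden : 0 < ‖w - 1‖ := by
    rw [norm_pos_iff]
    exact sub_ne_zero.mpr hw1
  gcongr

theorem atomic_lambda_max_asymptotics (s : ℕ)
    (m : Fin s → ℝ) (hm : ∀ α, 0 < m α) (θ : Fin s → ℝ)
    (hdist : Function.Injective fun α => Complex.exp (Complex.I * (θ α : ℂ))) :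
    ∃ C : ℝ, ∀ N : ℕ,
      |‖Matrix.toEuclideanCLM (𝕜 := ℂ) (atomicToeplitz s m θ N)‖ - (N : ℝ) * ⨆ α, m α| ≤ C := by
  classical
  rcases Nat.eq_zero_or_pos s with hs | hs
  · refine ⟨0, fun N => ?_⟩
    subst hs
    have h0 : atomicToeplitz 0 m θ N = 0 := by
      ext j k
      simp [atomicToeplitz]
    have hsup : (⨆ α : Fin 0, m α) = 0 := Real.iSup_of_isEmpty _
    rw [h0, hsup, map_zero, norm_zero]
    simp
  · haveI : Nonempty (Fin s) := ⟨⟨0, hs⟩⟩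
    set M := ⨆ α, m α with hM
    obtain ⟨α₀, hα₀⟩ := exists_eq_ciSup_of_finite (f := m)
    have hle : ∀ α, m α ≤ M := fun α =>
      le_ciSup (Set.Finite.bddAbove (Set.finite_range m)) α
    have hM0 : 0 ≤ M := (hm α₀).le.trans hα₀.le
    set C : ℝ := ∑ α : Fin s, ∑ β : Fin s,
      (if α = β then 0 else Real.sqrt (m α) * Real.sqrt (m β) *
        (2 / ‖Complex.exp (Complex.I * (θ β : ℂ)) / Complex.exp (Complex.I * (θ α : ℂ)) - 1‖))
      with hC
    have hC0 : 0 ≤ C := by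
      refine Finset.sum_nonneg fun α _ => Finset.sum_nonneg fun β _ => ?_
      split
      · exact le_refl 0
      · positivity
    refine ⟨C, fun N => ?_⟩
    set F := atomFactor s m θ N with hF
    set G := Fᴴ * F with hG
    have hQ : ‖Matrix.toEuclideanCLM (𝕜 := ℂ) (atomicToeplitz s m θ N)‖ = ‖G‖ := by
      rw [← matnorm_eq_clm, atomicToeplitz_eq_factor s m (fun α => (hm α).le) θ N]
      calc ‖F * Fᴴ‖ = ‖(Fᴴ)ᴴ * Fᴴ‖ := by rw [conjTranspose_conjTranspose]
        _ = ‖Fᴴ‖ * ‖Fᴴ‖ := Matrix.l2_opNorm_conjTranspose_mul_self _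
        _ = ‖F‖ * ‖F‖ := by rw [Matrix.l2_opNorm_conjTranspose]
        _ = ‖G‖ := (Matrix.l2_opNorm_conjTranspose_mul_self F).symm
    have hlow : (N : ℝ) * M ≤ ‖G‖ := by
      have h1 := entry_le_opnorm G α₀ α₀
      have h2 : G α₀ α₀ = (((N : ℝ) * m α₀ : ℝ) : ℂ) :=
        gram_diag s m (fun α => (hm α).le) θ N α₀
      rw [h2, Complex.norm_real, Real.norm_eq_abs,
        abs_of_nonneg (mul_nonneg (Nat.cast_nonneg N) (hm α₀).le)] at h1
      have hMm : M = m α₀ := hM.trans hα₀.symm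
      rw [hMm]
      exact h1
    set D := Matrix.diagonal (fun α : Fin s => (((N : ℝ) * m α : ℝ) : ℂ)) with hD
    have hDle : ‖D‖ ≤ (N : ℝ) * M := by
      refine opnorm_diagonal_le _ _ (mul_nonneg (Nat.cast_nonneg N) hM0) fun α => ?_
      rw [Complex.norm_real, Real.norm_eq_abs,
        abs_of_nonneg (mul_nonneg (Nat.cast_nonneg N) (hm α).le)]
      exact mul_le_mul_of_nonneg_left (hle α) (Nat.cast_nonneg N)
    have hRle : ‖G - D‖ ≤ C := by
      refine (opnorm_le_sum_entries _).trans ?_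
      rw [hC]
      refine Finset.sum_le_sum fun α _ => Finset.sum_le_sum fun β _ => ?_
      by_cases hab : α = β
      · subst hab
        have : (G - D) α α = 0 := by
          rw [Matrix.sub_apply, hG, gram_diag s m (fun α => (hm α).le) θ N α, hD,
            Matrix.diagonal_apply_eq, sub_self]
        rw [this, norm_zero, if_pos rfl]
      · have hoff : (G - D) α β = G α β := by
          rw [Matrix.sub_apply, hD, Matrix.diagonal_apply_ne _ hab, sub_zero]
        rw [if_neg hab, hoff, hG, gram_apply, norm_mul, Complex.norm_real, Real.norm_eq_abs,
          abs_of_nonneg (by positivity)]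
        exact mul_le_mul_of_nonneg_left (geom_bound s θ N hdist hab) (by positivity)
    have hup : ‖G‖ ≤ (N : ℝ) * M + C := by
      have hsplit : G = D + (G - D) := by abel
      calc ‖G‖ = ‖D + (G - D)‖ := by rw [← hsplit]
        _ ≤ ‖D‖ + ‖G - D‖ := norm_add_le _ _
        _ ≤ (N : ℝ) * M + C := add_le_add hDle hRle
    rw [hQ, abs_le]
    constructor <;> linarith
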